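/- Fix α ∈ [1, 3/2] and ε > 0. Assume the sum-product inequality: for every B ⊂ [1,2] that is 1/N-separated with δ = N^{-α}, one has |B|² ≤ C_ε (N^{1-α+ε} · N(B+B,δ)·N(B·B,δ) + N^{2α-1}). Let A = {1 + i/N : 1 ≤ i ≤ N} and G = {q^i : 1 ≤ i ≤ N} with q^N - 1 ≥ c > 0. Then |G ∩ E_δ(A)| ≤ C'_ε N^{max{α - 1/2, (3-α)/2} + ε}. -/

import Mathlib

open Pointwise Classical

/-- `packingNumber S δ` is the maximal cardinality of a `δ`-separated subset of `S`. -/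
noncomputable def packingNumber (S : Set ℝ) (δ : ℝ) : ℕ :=
  sSup {n : ℕ | ∃ T : Finset ℝ, ↑T ⊆ S ∧
    (∀ x ∈ T, ∀ y ∈ T, x ≠ y → δ ≤ |x - y|) ∧ T.card = n}

lemma packingNumber_le_of {S : Set ℝ} {δ : ℝ} {m : ℕ}
    (h : ∀ T : Finset ℝ, ↑T ⊆ S → (∀ x ∈ T, ∀ y ∈ T, x ≠ y → δ ≤ |x - y|) → T.card ≤ m) :
    packingNumber S δ ≤ m := by
  refine csSup_le ⟨0, ∅, by simp, by simp, rfl⟩ ?_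
  rintro n ⟨T, h1, h2, rfl⟩
  exact h T h1 h2

lemma sep_interval : ∀ (n : ℕ) (T : Finset ℝ) (a b s : ℝ), T.card = n → 0 < s → a ≤ b →
    (∀ x ∈ T, a ≤ x ∧ x ≤ b) → (∀ x ∈ T, ∀ y ∈ T, x ≠ y → s ≤ |x - y|) →
    ((T.card : ℝ) - 1) * s ≤ b - a := by
  intro n
  induction n with
  | zero => intro T a b s hcard hs hab _ _; rw [hcard]; push_cast; nlinarith
  | succ n ih =>
    intro T a b s hcard hs hab hmem hsep
    have hne : T.Nonempty := Finset.card_pos.mp (by omega)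
    set m := T.max' hne with hm
    have hmT : m ∈ T := T.max'_mem hne
    have hcard' : (T.erase m).card = n := by
      have := Finset.card_erase_of_mem hmT; omega
    rcases Nat.eq_zero_or_pos n with h0 | hpos
    · subst h0; rw [hcard]; push_cast
      have := hmem m hmT; nlinarith
    · have hne' : (T.erase m).Nonempty := Finset.card_pos.mp (by omega)
      obtain ⟨x0, hx0⟩ := hne'
      have hx0T : x0 ∈ T := Finset.mem_of_mem_erase hx0
      have hax0 : a ≤ x0 := (hmem x0 hx0T).1
      have hub : ∀ x ∈ T.erase m, a ≤ x ∧ x ≤ m - s := by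
        intro x hx
        have hxT : x ∈ T := Finset.mem_of_mem_erase hx
        have hxm : x ≠ m := Finset.ne_of_mem_erase hx
        have hle : x ≤ m := T.le_max' x hxT
        have := hsep x hxT m hmT hxm
        constructor
        · exact (hmem x hxT).1
        · rw [abs_sub_comm, abs_of_nonneg (by linarith)] at this; linarith
      have hab' : a ≤ m - s := by
        have := hub x0 hx0; linarith [this.1, this.2]
      have := ih (T.erase m) a (m - s) s hcard' hs hab' hub
        (fun x hx y hy hxy => hsep x (Finset.mem_of_mem_erase hx) y (Finset.mem_of_mem_erase hy) hxy)
      rw [hcard'] at this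
      rw [hcard]
      have hmb : m ≤ b := (hmem m hmT).2
      push_cast at this ⊢
      nlinarith

lemma geom_sep {q : ℝ} (hq : 1 < q) {i j : ℕ} (hij : i < j) : q - 1 ≤ q ^ j - q ^ i := by
  have h1 : (1:ℝ) ≤ q ^ i := one_le_pow₀ hq.le
  have h2 : q ≤ q ^ (j - i) := le_self_pow₀ hq.le (by omega)
  have h3 : q ^ i * (q ^ (j - i) - 1) = q ^ j - q ^ i := by
    rw [mul_sub, mul_one, ← pow_add]
    congr 2
    omega
  nlinarith

set_option maxHeartbeats 1000000 in
/-- Assuming the sum–product inequality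
`|B|² ≤ C_ε (N^{1-α+ε} N(B+B,δ) N(B·B,δ) + N^{2α-1})` for `1/N`-separated `B ⊆ [1,2]`
with `δ = N^{-α}`, the intersection of the geometric progression `G = {q^i : 1 ≤ i ≤ N}`
(with `q^N - 1 ≥ c > 0`) with the `δ`-neighborhood of the arithmetic progression
`A = {1 + i/N : 1 ≤ i ≤ N}` has at most `C'_ε N^{max(α-1/2, (3-α)/2)+ε}` elements. -/
theorem stmt15 (α ε c C : ℝ) (hα1 : 1 ≤ α) (hα2 : α ≤ 3 / 2) (hε : 0 < ε)
    (hc : 0 < c) (hC : 0 < C)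
    (h : ∀ (N : ℕ) (B : Finset ℝ), 0 < N →
      (↑B : Set ℝ) ⊆ Set.Icc 1 2 →
      (∀ x ∈ B, ∀ y ∈ B, x ≠ y → 1 / (N : ℝ) ≤ |x - y|) →
      ((B.card : ℝ)) ^ 2 ≤ C * ((N : ℝ) ^ (1 - α + ε) *
        ((packingNumber (↑B + ↑B) ((N : ℝ) ^ (-α)) : ℝ) *
          (packingNumber (↑B * ↑B) ((N : ℝ) ^ (-α)) : ℝ)) + (N : ℝ) ^ (2 * α - 1))) :
    ∃ C' : ℝ, 0 < C' ∧ ∀ (N : ℕ) (q : ℝ), 0 < N → 1 < q → c ≤ q ^ N - 1 →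
      ((((Finset.Icc 1 N).image (fun i : ℕ => q ^ i)).filter
          (fun x => ∃ i ∈ Finset.Icc 1 N, |x - (1 + (i : ℝ) / N)| ≤ (N : ℝ) ^ (-α))).card : ℝ)
        ≤ C' * (N : ℝ) ^ (max (α - 1 / 2) ((3 - α) / 2) + ε) := by
  classical
  set γ : ℝ := Real.log (1 + c) with hγdef
  have hγ : 0 < γ := Real.log_pos (by linarith)
  set γ' : ℝ := min γ 1 with hγ'def
  have hγ'0 : 0 < γ' := lt_min hγ one_pos
  have hγ'1 : γ' ≤ 1 := min_le_right _ _
  set k₀ : ℕ := ⌈1/γ'⌉₊ with hk₀def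
  have hk₀ : 1/γ' ≤ (k₀:ℝ) := Nat.le_ceil _
  have hk₀R : (1:ℝ) ≤ (k₀:ℝ) := by
    have : (1:ℝ) ≤ 1/γ' := by rw [le_div_iff₀ hγ'0]; linarith
    linarith
  have hk₀1 : 1 ≤ k₀ := by exact_mod_cast (by exact_mod_cast hk₀R : (1:ℕ) ≤ (k₀:ℕ))
  have hk₀γ : 1 ≤ (k₀:ℝ) * γ' := by
    rw [div_le_iff₀ hγ'0] at hk₀; linarith
  set K : ℕ := 4 * k₀^2 + 2 with hKdef
  set D : ℝ := 4 * (K:ℝ) * (k₀:ℝ)^(1+ε) + (k₀:ℝ)^(2:ℝ) with hDdef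
  have hK0 : (0:ℝ) < (K:ℝ) := by positivity
  have hD : 0 < D := by positivity
  have hk₀0 : (0:ℝ) < (k₀:ℝ) := by linarith
  set m' : ℝ := max (α - 1/2) ((3 - α)/2) + ε with hm'def
  have hm'0 : 0 < m' := by
    have h1 := le_max_right (α - 1/2) ((3 - α)/2)
    rw [hm'def]; nlinarith
  have hm1 : 3 - α + ε ≤ 2*m' := by
    have h1 := le_max_right (α - 1/2) ((3 - α)/2)
    rw [hm'def]; nlinarith
  have hm2 : 2*α - 1 ≤ 2*m' := by
    have h1 := le_max_left (α - 1/2) ((3 - α)/2)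
    rw [hm'def]; nlinarith
  refine ⟨Real.sqrt (C*D) + ((k₀:ℝ) + 1), by positivity, ?_⟩
  intro N q hN hq hcN
  set n : ℝ := (N:ℝ) with hndef
  have hn1 : (1:ℝ) ≤ n := by rw [hndef]; exact_mod_cast Nat.one_le_iff_ne_zero.mpr (Nat.pos_iff_ne_zero.mp hN)
  have hn0 : (0:ℝ) < n := by linarith
  set δ : ℝ := n ^ (-α) with hδdef
  have hδ0 : 0 < δ := Real.rpow_pos_of_pos hn0 _
  have hδ1 : δ ≤ 1/n := by
    have h1 : n ^ (-α) ≤ n ^ (-(1:ℝ)) := Real.rpow_le_rpow_of_exponent_le hn1 (by linarith)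
    rw [Real.rpow_neg_one] at h1
    rw [hδdef, one_div]
    exact h1
  suffices main : ∀ S : Finset ℝ,
      (∀ x, x ∈ S → (∃ i, 1 ≤ i ∧ i ≤ N ∧ x = q ^ i) ∧
        ∃ i : ℕ, 1 ≤ i ∧ i ≤ N ∧ |x - (1 + (i:ℝ)/n)| ≤ δ) →
      (S.card : ℝ) ≤ (Real.sqrt (C*D) + ((k₀:ℝ) + 1)) * n ^ m' by
    apply main
    intro x hx
    simp only [Finset.mem_filter, Finset.mem_image] at hx
    obtain ⟨⟨i, hi, hxi⟩, j, hj, hxj⟩ := hx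
    simp only [Finset.mem_Icc] at hi hj
    exact ⟨⟨i, hi.1, hi.2, hxi.symm⟩, ⟨j, hj.1, hj.2, hxj⟩⟩
  intro S hSmem
  -- lower bound on q - 1
  have hq1 : γ'/n ≤ q - 1 := by
    have h1 : q ≤ Real.exp (q-1) := by
      have := Real.add_one_le_exp (q-1); linarith
    have h2 : q^N ≤ Real.exp (n*(q-1)) := by
      calc q^N ≤ (Real.exp (q-1))^N := pow_le_pow_left₀ (by linarith) h1 N
      _ = Real.exp (n*(q-1)) := (Real.exp_nat_mul (q-1) N).symm
    have h3 : Real.exp γ ≤ Real.exp (n*(q-1)) := by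
      rw [hγdef, Real.exp_log (by linarith)]; linarith
    have h4 : γ ≤ n*(q-1) := Real.exp_le_exp.mp h3
    have h5 : γ' ≤ n*(q-1) := le_trans (min_le_left _ _) h4
    rw [div_le_iff₀ hn0]; linarith
  -- separation of S
  have hSsep : ∀ x ∈ S, ∀ y ∈ S, x ≠ y → γ'/n ≤ |x - y| := by
    intro x hx y hy hxy
    obtain ⟨⟨i, hi1, hiN, rfl⟩, -⟩ := hSmem x hx
    obtain ⟨⟨j, hj1, hjN, rfl⟩, -⟩ := hSmem y hy
    have hij : i ≠ j := fun hh => hxy (by rw [hh])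
    rcases hij.lt_or_gt with hlt | hlt
    · have := geom_sep hq hlt
      rw [abs_sub_comm, abs_of_nonneg (by linarith)]
      linarith
    · have := geom_sep hq hlt
      rw [abs_of_nonneg (by linarith)]
      linarith
  set B := S.filter (fun x => x ≤ 2) with hBdef
  have hBsub : B ⊆ S := Finset.filter_subset _ _
  -- few elements above 2
  have hcards : S.card ≤ B.card + (k₀ + 1) := by
    set T := S.filter (fun x => ¬ x ≤ 2) with hTdef
    have hsplit : S.card ≤ B.card + T.card := by
      have hsub : S ⊆ B ∪ T := by
        intro x hx
        by_cases hx2 : x ≤ 2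
        · exact Finset.mem_union_left _ (Finset.mem_filter.mpr ⟨hx, hx2⟩)
        · exact Finset.mem_union_right _ (Finset.mem_filter.mpr ⟨hx, hx2⟩)
      calc S.card ≤ (B ∪ T).card := Finset.card_le_card hsub
      _ ≤ B.card + T.card := Finset.card_union_le _ _
    have hTmem : ∀ x ∈ T, (2:ℝ) ≤ x ∧ x ≤ 2 + δ := by
      intro x hx
      rw [hTdef, Finset.mem_filter] at hx
      obtain ⟨hxS, hx2⟩ := hx
      obtain ⟨-, i, hi1, hiN, hxi⟩ := hSmem x hxS
      have h1 : (1:ℝ) + i/n ≤ 2 := by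
        have hin : (i:ℝ) ≤ n := by rw [hndef]; exact_mod_cast hiN
        have : (i:ℝ)/n ≤ 1 := by rw [div_le_one hn0]; exact hin
        linarith
      have h2 := abs_le.mp hxi
      exact ⟨le_of_lt (not_le.mp hx2), by linarith [h2.1, h2.2]⟩
    have hTsep : ∀ x ∈ T, ∀ y ∈ T, x ≠ y → γ'/n ≤ |x - y| := fun x hx y hy hxy =>
      hSsep x (Finset.mem_of_mem_filter x hx) y (Finset.mem_of_mem_filter y hy) hxy
    have hsi := sep_interval T.card T 2 (2+δ) (γ'/n) rfl (by positivity)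
      (by linarith) hTmem hTsep
    have hTcard : (T.card : ℝ) ≤ (k₀:ℝ) + 1 := by
      have hδn : δ * n ≤ 1 := by
        rw [← le_div_iff₀ hn0] at *; exact hδ1
      have key : ((T.card:ℝ) - 1) * γ' ≤ 1 := by
        have := mul_le_mul_of_nonneg_right hsi (le_of_lt hn0)
        have heq : ((T.card:ℝ) - 1) * (γ'/n) * n = ((T.card:ℝ) - 1) * γ' := by
          field_simp
        rw [heq] at this
        simp only [add_sub_cancel_left] at this
        linarith [this, hδn]
      nlinarith [hk₀γ, hγ'0]
    have hTN : T.card ≤ k₀ + 1 := by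
      have : (T.card:ℝ) ≤ ((k₀ + 1 : ℕ):ℝ) := by push_cast; linarith
      exact_mod_cast this
    omega
  -- B ⊆ [1,2]
  have hBIcc : (↑B : Set ℝ) ⊆ Set.Icc 1 2 := by
    intro x hx
    rw [Finset.mem_coe, hBdef, Finset.mem_filter] at hx
    obtain ⟨hxS, hx2⟩ := hx
    obtain ⟨⟨i, hi1, -, rfl⟩, -⟩ := hSmem _ hxS
    exact ⟨one_le_pow₀ hq.le, hx2⟩
  set M : ℕ := k₀ * N with hMdef
  have hM0 : 0 < M := Nat.mul_pos hk₀1 hN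
  have hMr : (M:ℝ) = (k₀:ℝ) * n := by rw [hMdef, hndef]; push_cast; ring
  have hMr0 : (0:ℝ) < (M:ℝ) := by rw [hMr]; positivity
  -- separation of B at scale 1/M
  have hBsep : ∀ x ∈ B, ∀ y ∈ B, x ≠ y → 1/(M:ℝ) ≤ |x - y| := by
    intro x hx y hy hxy
    have h1 := hSsep x (hBsub hx) y (hBsub hy) hxy
    have h2 : 1/(M:ℝ) ≤ γ'/n := by
      rw [hMr, div_le_div_iff₀ (by positivity) hn0]
      nlinarith [hk₀γ, hn0, hn1]
    linarith
  -- packing bound for B·B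
  have hPx : packingNumber ((↑B:Set ℝ) * ↑B) ((M:ℝ)^(-α)) ≤ 2*N := by
    apply packingNumber_le_of
    intro T hTsub _
    have hsub2 : T ⊆ B * B := by
      rw [← Finset.coe_subset, Finset.coe_mul]; exact hTsub
    have hsub3 : B * B ⊆ (Finset.Icc 2 (2*N)).image (fun k : ℕ => q ^ k) := by
      intro x hx
      obtain ⟨a, ha, b, hb, rfl⟩ := Finset.mem_mul.mp hx
      obtain ⟨⟨i, hi1, hiN, rfl⟩, -⟩ := hSmem a (hBsub ha)
      obtain ⟨⟨j, hj1, hjN, rfl⟩, -⟩ := hSmem b (hBsub hb)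
      rw [Finset.mem_image]
      exact ⟨i+j, Finset.mem_Icc.mpr ⟨by omega, by omega⟩, pow_add q i j⟩
    calc T.card ≤ (B*B).card := Finset.card_le_card hsub2
    _ ≤ ((Finset.Icc 2 (2*N)).image (fun k : ℕ => q ^ k)).card := Finset.card_le_card hsub3
    _ ≤ (Finset.Icc 2 (2*N)).card := Finset.card_image_le
    _ ≤ 2*N := by rw [Nat.card_Icc]; omega
  -- packing bound for B+B
  have hδM : (k₀:ℝ)^α * (M:ℝ)^(-α) = δ := by
    rw [hMr, Real.mul_rpow (le_of_lt hk₀0) (le_of_lt hn0), ← mul_assoc,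
      ← Real.rpow_add hk₀0]
    simp [hδdef]
  have hP : packingNumber ((↑B:Set ℝ) + ↑B) ((M:ℝ)^(-α)) ≤ 2*N*K := by
    apply packingNumber_le_of
    intro T hTsub hTsep
    have hT' : ∀ t ∈ T, ∃ k, k ∈ Finset.Icc 2 (2*N) ∧ |t - (2 + (k:ℝ)/n)| ≤ 2*δ := by
      intro t ht
      have hmem : t ∈ (↑B:Set ℝ) + ↑B := hTsub ht
      rw [← Finset.coe_add, Finset.mem_coe] at hmem
      obtain ⟨a, ha, b, hb, rfl⟩ := Finset.mem_add.mp hmem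
      obtain ⟨-, i, hi1, hiN, hai⟩ := hSmem a (hBsub ha)
      obtain ⟨-, j, hj1, hjN, hbj⟩ := hSmem b (hBsub hb)
      refine ⟨i+j, Finset.mem_Icc.mpr ⟨by omega, by omega⟩, ?_⟩
      have h1 := abs_le.mp hai
      have h2 := abs_le.mp hbj
      rw [abs_le]
      push_cast
      rw [add_div]
      constructor <;> [nlinarith [h1.1, h1.2, h2.1, h2.2]; nlinarith [h1.1, h1.2, h2.1, h2.2]]
    set f : ℝ → ℕ := fun t =>
      if ht : ∃ k, k ∈ Finset.Icc 2 (2*N) ∧ |t - (2 + (k:ℝ)/n)| ≤ 2*δ then ht.choose else 0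
      with hfdef
    have hf : ∀ t ∈ T, f t ∈ Finset.Icc 2 (2*N) ∧ |t - (2 + (f t:ℝ)/n)| ≤ 2*δ := by
      intro t ht
      have hex := hT' t ht
      rw [hfdef]
      simp only [dif_pos hex]
      exact hex.choose_spec
    have hcard := Finset.card_eq_sum_card_fiberwise (fun t ht => (hf t ht).1)
    have hfib : ∀ k ∈ Finset.Icc 2 (2*N), (T.filter (fun t => f t = k)).card ≤ K := by
      intro k hk
      set F := T.filter (fun t => f t = k) with hFdef
      have hFmem : ∀ x ∈ F, 2 + (k:ℝ)/n - 2*δ ≤ x ∧ x ≤ 2 + (k:ℝ)/n + 2*δ := by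
        intro x hx
        rw [hFdef, Finset.mem_filter] at hx
        obtain ⟨hxT, hxk⟩ := hx
        have hh := (hf x hxT).2
        rw [hxk] at hh
        have hh2 := abs_le.mp hh
        constructor <;> linarith [hh2.1, hh2.2]
      have hFsep : ∀ x ∈ F, ∀ y ∈ F, x ≠ y → (M:ℝ)^(-α) ≤ |x - y| := fun x hx y hy hxy =>
        hTsep x (Finset.mem_of_mem_filter x hx) y (Finset.mem_of_mem_filter y hy) hxy
      have hsi := sep_interval F.card F _ _ ((M:ℝ)^(-α)) rfl
        (Real.rpow_pos_of_pos hMr0 _) (by linarith) hFmem hFsep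
      have hwidth : (2 + (k:ℝ)/n + 2*δ) - (2 + (k:ℝ)/n - 2*δ) = 4 * ((k₀:ℝ)^α * (M:ℝ)^(-α)) := by
        rw [hδM]; ring
      rw [hwidth] at hsi
      have hδ'0 : (0:ℝ) < (M:ℝ)^(-α) := Real.rpow_pos_of_pos hMr0 _
      have hF1 : (F.card:ℝ) - 1 ≤ 4 * (k₀:ℝ)^α := by
        have := (mul_le_mul_iff_of_pos_right hδ'0).mp (by linarith [hsi] : ((F.card:ℝ) - 1) * ((M:ℝ)^(-α)) ≤ (4*(k₀:ℝ)^α) * ((M:ℝ)^(-α)))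
        exact this
      have hka : (k₀:ℝ)^α ≤ ((k₀^2 : ℕ):ℝ) := by
        have h1 : (k₀:ℝ)^α ≤ (k₀:ℝ)^((2:ℕ):ℝ) :=
          Real.rpow_le_rpow_of_exponent_le hk₀R (by push_cast; linarith)
        rw [Real.rpow_natCast] at h1
        push_cast
        exact h1
      have : (F.card:ℝ) ≤ ((K:ℕ):ℝ) := by
        rw [hKdef]; push_cast at hka ⊢; linarith
      exact_mod_cast this
    calc T.card = ∑ k ∈ Finset.Icc 2 (2*N), (T.filter (fun t => f t = k)).card := hcard
    _ ≤ (Finset.Icc 2 (2*N)).card * K := by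
        simpa using Finset.sum_le_card_nsmul _ _ K hfib
    _ ≤ 2*N*K := by
        rw [Nat.card_Icc]
        have : 2*N + 1 - 2 ≤ 2*N := by omega
        exact Nat.mul_le_mul_right K this
  -- apply the sum-product hypothesis
  have hbound := h M B hM0 hBIcc hBsep
  -- real-valued packing bounds
  have hPxR : ((packingNumber ((↑B:Set ℝ) * ↑B) ((M:ℝ)^(-α)) : ℕ):ℝ) ≤ 2*n := by
    rw [hndef]; exact_mod_cast hPx
  have hPR : ((packingNumber ((↑B:Set ℝ) + ↑B) ((M:ℝ)^(-α)) : ℕ):ℝ) ≤ 2*n*(K:ℝ) := by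
    rw [hndef]; exact_mod_cast hP
  have hPx0 : (0:ℝ) ≤ ((packingNumber ((↑B:Set ℝ) * ↑B) ((M:ℝ)^(-α)) : ℕ):ℝ) := Nat.cast_nonneg _
  have hP0 : (0:ℝ) ≤ ((packingNumber ((↑B:Set ℝ) + ↑B) ((M:ℝ)^(-α)) : ℕ):ℝ) := Nat.cast_nonneg _
  have hM1 : (1:ℝ) ≤ (M:ℝ) := by rw [hMr]; nlinarith
  have hMx1 : (M:ℝ)^(1-α+ε) ≤ (k₀:ℝ)^(1+ε) * n^(1-α+ε) := by
    rw [hMr, Real.mul_rpow (le_of_lt hk₀0) (le_of_lt hn0)]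
    have : (k₀:ℝ)^(1-α+ε) ≤ (k₀:ℝ)^(1+ε) :=
      Real.rpow_le_rpow_of_exponent_le hk₀R (by linarith)
    exact mul_le_mul_of_nonneg_right this (Real.rpow_nonneg (le_of_lt hn0) _)
  have hMx2 : (M:ℝ)^(2*α-1) ≤ (k₀:ℝ)^(2:ℝ) * n^(2*α-1) := by
    rw [hMr, Real.mul_rpow (le_of_lt hk₀0) (le_of_lt hn0)]
    have : (k₀:ℝ)^(2*α-1) ≤ (k₀:ℝ)^(2:ℝ) :=
      Real.rpow_le_rpow_of_exponent_le hk₀R (by linarith)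
    exact mul_le_mul_of_nonneg_right this (Real.rpow_nonneg (le_of_lt hn0) _)
  -- combine
  have hrpow_pos : ∀ z : ℝ, (0:ℝ) < n ^ z := fun z => Real.rpow_pos_of_pos hn0 z
  have hkey : n^(1-α+ε) * (n * n) = n^(3-α+ε) := by
    have h2 : n ^ (2:ℝ) = n * n := by
      rw [show (2:ℝ) = ((2:ℕ):ℝ) by norm_num, Real.rpow_natCast]; ring
    rw [← h2, ← Real.rpow_add hn0]
    congr 1
    ring
  have hexp1 : n^(3-α+ε) ≤ n^(2*m') := Real.rpow_le_rpow_of_exponent_le hn1 hm1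
  have hexp2 : n^(2*α-1) ≤ n^(2*m') := Real.rpow_le_rpow_of_exponent_le hn1 hm2
  have hb0 : (0:ℝ) ≤ (B.card:ℝ) := Nat.cast_nonneg _
  have hsq : ((B.card:ℝ))^2 ≤ (C*D) * n^(2*m') := by
    have step1 : ((B.card:ℝ))^2 ≤ C * ((k₀:ℝ)^(1+ε) * n^(1-α+ε) * ((2*n*(K:ℝ)) * (2*n))
        + (k₀:ℝ)^(2:ℝ) * n^(2*α-1)) := by
      refine le_trans hbound ?_
      apply mul_le_mul_of_nonneg_left _ (le_of_lt hC)
      apply add_le_add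
      · apply mul_le_mul hMx1
        · apply mul_le_mul hPR hPxR hPx0
          positivity
        · exact mul_nonneg hP0 hPx0
        · exact mul_nonneg (Real.rpow_nonneg (le_of_lt hk₀0) _)
            (Real.rpow_nonneg (le_of_lt hn0) _)
      · exact hMx2
    have step2 : C * ((k₀:ℝ)^(1+ε) * n^(1-α+ε) * ((2*n*(K:ℝ)) * (2*n))
        + (k₀:ℝ)^(2:ℝ) * n^(2*α-1))
        = C * (4*(K:ℝ)*(k₀:ℝ)^(1+ε) * (n^(1-α+ε) * (n*n)) + (k₀:ℝ)^(2:ℝ) * n^(2*α-1)) := by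
      ring
    have step3 : C * (4*(K:ℝ)*(k₀:ℝ)^(1+ε) * (n^(1-α+ε) * (n*n)) + (k₀:ℝ)^(2:ℝ) * n^(2*α-1))
        ≤ C * (4*(K:ℝ)*(k₀:ℝ)^(1+ε) * n^(2*m') + (k₀:ℝ)^(2:ℝ) * n^(2*m')) := by
      apply mul_le_mul_of_nonneg_left _ (le_of_lt hC)
      rw [hkey]
      apply add_le_add
      · exact mul_le_mul_of_nonneg_left hexp1 (by positivity)
      · exact mul_le_mul_of_nonneg_left hexp2 (by positivity)
    have step4 : C * (4*(K:ℝ)*(k₀:ℝ)^(1+ε) * n^(2*m') + (k₀:ℝ)^(2:ℝ) * n^(2*m'))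
        = (C*D) * n^(2*m') := by
      rw [hDdef]; ring
    calc ((B.card:ℝ))^2 ≤ _ := step1
    _ = _ := step2
    _ ≤ _ := step3
    _ = _ := step4
  have hBle : (B.card:ℝ) ≤ Real.sqrt (C*D) * n^m' := by
    have hX0 : (0:ℝ) ≤ Real.sqrt (C*D) * n^m' := by positivity
    have hX2 : (Real.sqrt (C*D) * n^m')^2 = (C*D) * n^(2*m') := by
      rw [mul_pow, Real.sq_sqrt (by positivity : (0:ℝ) ≤ C*D)]
      congr 1
      rw [← Real.rpow_natCast (n^m') 2, ← Real.rpow_mul (le_of_lt hn0)]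
      norm_num
      rw [mul_comm]
    calc (B.card:ℝ) = Real.sqrt ((B.card:ℝ)^2) := (Real.sqrt_sq hb0).symm
    _ ≤ Real.sqrt ((Real.sqrt (C*D) * n^m')^2) := Real.sqrt_le_sqrt (by rw [hX2]; exact hsq)
    _ = Real.sqrt (C*D) * n^m' := Real.sqrt_sq hX0
  have hone : (1:ℝ) ≤ n^m' := Real.one_le_rpow hn1 (le_of_lt hm'0)
  have hScard : (S.card:ℝ) ≤ (B.card:ℝ) + ((k₀:ℝ) + 1) := by
    have := (Nat.cast_le (α := ℝ)).mpr hcards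
    push_cast at this
    linarith
  have hk01 : (0:ℝ) ≤ (k₀:ℝ) + 1 := by linarith
  have hfinal : ((k₀:ℝ) + 1) ≤ ((k₀:ℝ) + 1) * n^m' := le_mul_of_one_le_right hk01 hone
  calc (S.card:ℝ) ≤ Real.sqrt (C*D) * n^m' + ((k₀:ℝ) + 1) * n^m' := by linarith
  _ = (Real.sqrt (C*D) + ((k₀:ℝ) + 1)) * n^m' := (add_mul _ _ _).symm
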